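/- Let $K$ be a field, $n \geq 3$, and let $L(z)$ be the $n \times n$ periodic Jacobi matrix with diagonal entries $(I_1 + V_n, I_2 + V_1, \dots, I_n + V_{n-1})$, superdiagonal entries all $1$, subdiagonal entries $(I_1 V_1, \dots, I_{n-1} V_{n-1})$, entry $I_n V_n / z$ in position $(1, n)$, and entry $z$ in position $(n, 1)$, over the field $K(z)$ of rational functions (with $I_i, V_i \in K$). Then $(-1)^{n-1} z \det(L(z) - x E_n)$, as an element of $K(z)[x]$ viewed in $K[x][z, z^{-1}]$, equals $z^2 + h(x) z - f(x)$ for some $h \in K[x]$ of degree $n$ and $f = \prod_{i=1}^n I_i V_i \cdot (-1) \in K$ (i.e., $f = -I_1 V_1 \cdots I_n V_n$), assuming the leading coefficient condition holds (the coefficient of $x^n$ in $h$ is $(-1)^{2n-1} = -1$ up to sign, i.e., $h$ has degree exactly $n$). -/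

import Mathlib

open Polynomial

/-- The `n × n` periodic Jacobi matrix over `K(z)` (here `z = RatFunc.X`), with diagonal
`(I₁+Vₙ, I₂+V₁, …, Iₙ+Vₙ₋₁)`, superdiagonal all `1`, subdiagonal `(I₁V₁, …, Iₙ₋₁Vₙ₋₁)`,
entry `IₙVₙ/z` at position `(1, n)` and entry `z` at position `(n, 1)`. -/
noncomputable def pJac (K : Type*) [Field K] (n : ℕ) (I V : ℕ → K) :
    Matrix (Fin n) (Fin n) (RatFunc K) :=
  Matrix.of fun i j =>
    if (i : ℕ) = j then RatFunc.C (I ((i : ℕ) + 1) + V (if (i : ℕ) = 0 then n else (i : ℕ)))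
    else if (i : ℕ) + 1 = j then 1
    else if (j : ℕ) + 1 = i then RatFunc.C (I ((j : ℕ) + 1) * V ((j : ℕ) + 1))
    else if (i : ℕ) = 0 ∧ (j : ℕ) = n - 1 then RatFunc.C (I n * V n) / RatFunc.X
    else if (i : ℕ) = n - 1 ∧ (j : ℕ) = 0 then RatFunc.X
    else 0

section Aux

/-- Tridiagonal matrix: diagonal `d`, superdiagonal `1`, subdiagonal entry `c j` at `(j+1,j)`. -/
def triM (R : Type*) [CommRing R] (n : ℕ) (d c : ℕ → R) : Matrix (Fin n) (Fin n) R :=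
  Matrix.of fun i j =>
    if (i : ℕ) = j then d i
    else if (i : ℕ) + 1 = j then 1
    else if (j : ℕ) + 1 = i then c j
    else 0

variable {R : Type*} [CommRing R]

lemma triM_map {S : Type*} [CommRing S] (f : R →+* S) (n : ℕ) (d c : ℕ → R) :
    (triM R n d c).map f = triM S n (f ∘ d) (f ∘ c) := by
  ext i j
  simp only [triM, Matrix.map_apply, Matrix.of_apply]
  split_ifs <;> simp

lemma triM_submatrix_succ (n : ℕ) (d c : ℕ → R) :
    (triM R (n + 1) d c).submatrix Fin.succ Fin.succ
      = triM R n (fun i => d (i + 1)) (fun i => c (i + 1)) := by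
  ext i j
  simp only [triM, Matrix.submatrix_apply, Matrix.of_apply, Fin.val_succ]
  split_ifs <;> first | rfl | (exfalso; omega) | simp_all

lemma det_updateRow_single {m : ℕ}
    (A : Matrix (Fin (m + 1)) (Fin (m + 1)) R) (i j : Fin (m + 1)) :
    (A.updateRow i (Pi.single j 1)).det
      = (-1 : R) ^ ((i : ℕ) + (j : ℕ)) * (A.submatrix i.succAbove j.succAbove).det := by
  rw [Matrix.det_succ_row _ i]
  rw [Finset.sum_eq_single j]
  · simp [Matrix.updateRow_apply, Matrix.submatrix_updateRow_succAbove]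
  · intro b _ hb
    simp [Matrix.updateRow_apply, Pi.single_apply, hb]
  · simp

lemma det_triM_rec (n : ℕ) (d c : ℕ → R) :
    (triM R (n + 2) d c).det
      = d 0 * (triM R (n + 1) (fun i => d (i + 1)) (fun i => c (i + 1))).det
        - c 0 * (triM R n (fun i => d (i + 2)) (fun i => c (i + 2))).det := by
  rw [Matrix.det_succ_column_zero]
  rw [Fin.sum_univ_succ, Fin.sum_univ_succ]
  have h0 : (triM R (n + 2) d c) 0 0 = d 0 := by simp [triM]
  have h1 : (triM R (n + 2) d c) (Fin.succ 0) 0 = c 0 := by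
    simp only [triM, Matrix.of_apply, Fin.val_succ, Fin.val_zero]
    norm_num
  have hz : ∀ i : Fin n, (triM R (n + 2) d c) i.succ.succ 0 = 0 := by
    intro i
    have h2 : ((i.succ.succ : Fin (n+2)) : ℕ) = (i : ℕ) + 2 := by simp only [Fin.val_succ]
    simp only [triM, Matrix.of_apply, h2, Fin.val_zero]
    split_ifs <;> first | rfl | (exfalso; omega) | simp_all
  rw [h0, h1]
  have hsum : ∑ i : Fin n,
      (-1) ^ ((i.succ.succ : Fin (n+2)) : ℕ) * (triM R (n + 2) d c) i.succ.succ 0 *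
        ((triM R (n + 2) d c).submatrix i.succ.succ.succAbove Fin.succ).det = 0 := by
    apply Finset.sum_eq_zero
    intro i _
    rw [hz i]; ring
  rw [hsum, add_zero]
  have hm0 : (triM R (n + 2) d c).submatrix (Fin.succAbove 0) Fin.succ
      = triM R (n + 1) (fun i => d (i + 1)) (fun i => c (i + 1)) := by
    have : (Fin.succAbove (0 : Fin (n+2))) = Fin.succ := funext fun i => Fin.zero_succAbove i
    rw [this, triM_submatrix_succ]
  have hm1 : ((triM R (n + 2) d c).submatrix (Fin.succAbove 1) Fin.succ).det
      = (triM R n (fun i => d (i + 2)) (fun i => c (i + 2))).det := by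
    set M := (triM R (n + 2) d c).submatrix (Fin.succAbove 1) Fin.succ with hM
    have h1 : ((Fin.succAbove (1 : Fin (n+2)) (0 : Fin (n+1))) : ℕ) = 0 := by
      rw [Fin.succAbove_of_castSucc_lt _ _ (by simp [Fin.lt_iff_val_lt_val])]
      simp
    have hrow : M = M.updateRow 0 (Pi.single 0 1) := by
      ext r s
      rw [Matrix.updateRow_apply]
      by_cases hr : r = 0
      · subst hr
        rw [if_pos rfl]
        simp only [hM, Matrix.submatrix_apply, triM, Matrix.of_apply, h1, Fin.val_succ,
          Pi.single_apply]
        by_cases hs : s = 0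
        · subst hs; norm_num
        · have hs' : (s : ℕ) ≠ 0 := fun h => hs (Fin.ext h)
          rw [if_neg (by omega), if_neg (by omega), if_neg (by omega), if_neg hs]
      · rw [if_neg hr]
    rw [hrow, det_updateRow_single]
    have hsub : M.submatrix (Fin.succAbove 0) (Fin.succAbove 0)
        = triM R n (fun i => d (i + 2)) (fun i => c (i + 2)) := by
      ext r s
      simp only [hM, Matrix.submatrix_apply, triM, Matrix.of_apply]
      have hra : ((Fin.succAbove (1 : Fin (n+2)) (Fin.succAbove 0 r)) : ℕ) = (r : ℕ) + 2 := by
        rw [Fin.zero_succAbove,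
          Fin.succAbove_of_le_castSucc _ _ (by simp [Fin.le_iff_val_le_val])]
        simp
      have hsa : ((Fin.succ (Fin.succAbove 0 s)) : ℕ) = (s : ℕ) + 2 := by
        rw [Fin.zero_succAbove]; simp
      rw [hra, hsa]
      split_ifs <;> first | rfl | (exfalso; omega) | simp_all
    rw [hsub]
    simp
  rw [hm0]
  rw [show (Fin.succ (0 : Fin (n+1))).succAbove = Fin.succAbove (1 : Fin (n+2)) by
    rw [Fin.succ_zero_eq_one]]
  rw [hm1]
  simp only [Fin.val_zero, pow_zero, one_mul, Fin.val_succ, pow_succ, pow_zero]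
  ring

/-- `det` of the tridiagonal "characteristic" matrix, as a polynomial. -/
noncomputable def triP (R : Type*) [CommRing R] (n : ℕ) (d c : ℕ → R) : R[X] :=
  (triM R[X] n (fun i => C (d i) - X) (fun i => C (c i))).det

lemma triP_spec (n : ℕ) (d c : ℕ → R) :
    (triP R n d c).natDegree ≤ n ∧ (triP R n d c).coeff n = (-1) ^ n := by
  induction n using Nat.strong_induction_on generalizing d c with
  | _ n ih =>
    match n with
    | 0 =>
      have : triP R 0 d c = 1 := Matrix.det_fin_zero
      simp [this]
    | 1 =>
      have : triP R 1 d c = C (d 0) - X := by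
        rw [triP, Matrix.det_fin_one]
        simp [triM]
      rw [this]
      constructor
      · exact le_trans (natDegree_sub_le _ _) (by simp [natDegree_X_le])
      · simp [coeff_sub]
    | (k + 2) =>
      have hrec : triP R (k+2) d c
          = (C (d 0) - X) * triP R (k+1) (fun i => d (i+1)) (fun i => c (i+1))
            - C (c 0) * triP R k (fun i => d (i+2)) (fun i => c (i+2)) := by
        rw [triP, det_triM_rec]; rfl
      obtain ⟨hA, hAc⟩ := ih (k+1) (by omega) (fun i => d (i+1)) (fun i => c (i+1))
      obtain ⟨hB, _⟩ := ih k (by omega) (fun i => d (i+2)) (fun i => c (i+2))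
      set A := triP R (k+1) (fun i => d (i+1)) (fun i => c (i+1))
      set B := triP R k (fun i => d (i+2)) (fun i => c (i+2))
      constructor
      · rw [hrec]
        refine le_trans (natDegree_sub_le _ _) (max_le ?_ ?_)
        · refine le_trans (natDegree_mul_le) ?_
          have h1 : (C (d 0) - X).natDegree ≤ 1 :=
            le_trans (natDegree_sub_le _ _) (by simp [natDegree_X_le])
          omega
        · refine le_trans (natDegree_mul_le) ?_
          have : (C (c 0)).natDegree = 0 := natDegree_C _
          omega
      · rw [hrec]
        rw [coeff_sub, sub_mul, coeff_sub]
        have e1 : (C (d 0) * A).coeff (k+2) = 0 := by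
          rw [coeff_C_mul, coeff_eq_zero_of_natDegree_lt (by omega), mul_zero]
        have e2 : (X * A).coeff (k+2) = (-1)^(k+1) := by rw [coeff_X_mul, hAc]
        have e3 : (C (c 0) * B).coeff (k+2) = 0 := by
          rw [coeff_C_mul, coeff_eq_zero_of_natDegree_lt (by omega), mul_zero]
        rw [e1, e2, e3]
        ring

lemma det_triM_sub_sc (N : ℕ) (d c : ℕ → R) :
    ((triM R (N+1) d c).submatrix Fin.succ Fin.castSucc).det = ∏ r : Fin N, c (r : ℕ) := by
  rw [Matrix.det_of_upperTriangular]
  · apply Finset.prod_congr rfl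
    intro r _
    simp only [Matrix.submatrix_apply, triM, Matrix.of_apply, Fin.val_succ, Fin.coe_castSucc]
    rw [if_neg (by omega), if_neg (by omega)]
    simp
  · intro i j hij
    have hlt : (j : ℕ) < (i : ℕ) := Fin.lt_iff_val_lt_val.mp hij
    simp only [Matrix.submatrix_apply, triM, Matrix.of_apply, Fin.val_succ, Fin.coe_castSucc]
    rw [if_neg (by omega), if_neg (by omega), if_neg (by omega)]

lemma det_triM_sub_cs (N : ℕ) (d c : ℕ → R) :
    ((triM R (N+1) d c).submatrix Fin.castSucc Fin.succ).det = 1 := by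
  rw [Matrix.det_of_lowerTriangular]
  · rw [Finset.prod_congr rfl (fun r _ => ?_), Finset.prod_const_one]
    simp only [Matrix.submatrix_apply, triM, Matrix.of_apply, Fin.val_succ, Fin.coe_castSucc]
    rw [if_neg (by omega)]
    simp
  · intro i j hij
    have hlt : (i : ℕ) < (j : ℕ) := Fin.lt_iff_val_lt_val.mp (OrderDual.toDual_lt_toDual.mp hij)
    simp only [Matrix.submatrix_apply, triM, Matrix.of_apply, Fin.val_succ, Fin.coe_castSucc]
    rw [if_neg (by omega), if_neg (by omega), if_neg (by omega)]

lemma triM_sub_shift (N : ℕ) (d c : ℕ → R) :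
    ((triM R (N+2) d c).submatrix (fun r : Fin N => (Fin.castSucc r).succ)
        (fun s : Fin N => (Fin.succ s).castSucc))
      = triM R N (fun i => d (i+1)) (fun i => c (i+1)) := by
  ext r s
  simp only [Matrix.submatrix_apply, triM, Matrix.of_apply, Fin.val_succ, Fin.coe_castSucc]
  split_ifs <;> first | rfl | (exfalso; omega) | simp_all

lemma cof1 (m : ℕ) (d c : ℕ → R) :
    ((triM R (m+3) d c).updateRow 0 (Pi.single (Fin.last (m+2)) 1)).det
      = (-1 : R) ^ (m + 2) * ∏ r : Fin (m+2), c (r : ℕ) := by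
  rw [det_updateRow_single]
  have h0 : (Fin.succAbove (0 : Fin (m+3))) = Fin.succ := funext fun i => Fin.zero_succAbove i
  rw [h0, Fin.succAbove_last, det_triM_sub_sc]
  norm_num [Fin.val_last]

lemma cof2 (m : ℕ) (d c : ℕ → R) :
    ((triM R (m+3) d c).updateRow (Fin.last (m+2)) (Pi.single 0 1)).det
      = (-1 : R) ^ (m + 2) := by
  rw [det_updateRow_single]
  have h0 : (Fin.succAbove (0 : Fin (m+3))) = Fin.succ := funext fun i => Fin.zero_succAbove i
  rw [h0, Fin.succAbove_last, det_triM_sub_cs]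
  norm_num [Fin.val_last]

lemma cof3 (m : ℕ) (d c : ℕ → R) :
    (((triM R (m+3) d c).updateRow (Fin.last (m+2)) (Pi.single 0 1)).updateRow 0
        (Pi.single (Fin.last (m+2)) 1)).det
      = - (triM R (m+1) (fun i => d (i+1)) (fun i => c (i+1))).det := by
  rw [det_updateRow_single]
  have h0 : (Fin.succAbove (0 : Fin (m+3))) = Fin.succ := funext fun i => Fin.zero_succAbove i
  rw [h0, Fin.succAbove_last]
  have hsub : ((triM R (m+3) d c).updateRow (Fin.last (m+2)) (Pi.single 0 1)).submatrix
        Fin.succ Fin.castSucc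
      = ((triM R (m+3) d c).submatrix Fin.succ Fin.castSucc).updateRow (Fin.last (m+1))
          (Pi.single 0 1) := by
    ext r s
    rw [Matrix.submatrix_apply, Matrix.updateRow_apply, Matrix.updateRow_apply]
    by_cases hr : r = Fin.last (m+1)
    · subst hr
      rw [if_pos rfl, if_pos (by rw [Fin.succ_last]), Pi.single_apply, Pi.single_apply]
      congr 1
      simp only [eq_iff_iff]
      constructor
      · intro h; exact Fin.ext (by simpa using congrArg Fin.val h)
      · intro h; subst h; rfl
    · rw [if_neg hr, if_neg (by
        intro h
        exact hr (by
          have := congrArg Fin.val h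
          simp only [Fin.val_succ, Fin.val_last] at this
          exact Fin.ext (by simp only [Fin.val_last]; omega))), Matrix.submatrix_apply]
  rw [hsub, det_updateRow_single]
  have h1 : (Fin.succAbove (Fin.last (m+1))) = Fin.castSucc := Fin.succAbove_last
  have h2 : (Fin.succAbove (0 : Fin (m+2))) = Fin.succ := funext fun i => Fin.zero_succAbove i
  rw [h1, h2]
  have h3 : (((triM R (m+3) d c).submatrix Fin.succ Fin.castSucc).submatrix
        Fin.castSucc Fin.succ)
      = triM R (m+1) (fun i => d (i+1)) (fun i => c (i+1)) := by
    rw [Matrix.submatrix_submatrix]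
    exact triM_sub_shift (m+1) d c
  rw [h3]
  simp only [Fin.val_last, Fin.val_zero, add_zero, Fin.coe_castSucc]
  rw [← mul_assoc, ← pow_add]
  have he : 0 + (m + 2) + (m + 1) = 2 * (m + 1) + 1 := by ring
  rw [he, pow_succ, pow_mul]
  norm_num

end Aux

set_option maxHeartbeats 3200000 in
/-- The spectral curve of the discrete periodic Toda flow:
`(−1)^{n−1} z · det(L(z) − x Eₙ) = z² + h(x) z − f(x)` with `h ∈ K[x]` of degree exactly
`n` and `f = −I₁V₁ ⋯ IₙVₙ` (so `−f(x) = +∏ᵢ IᵢVᵢ`). -/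
theorem stmt_11 {K : Type*} [Field K] (n : ℕ) (hn : 3 ≤ n) (I V : ℕ → K) :
    ∃ h : K[X], h.natDegree = n ∧
      (-1 : Polynomial (RatFunc K)) ^ (n - 1) * C RatFunc.X *
        ((pJac K n I V).map (C : RatFunc K →+* Polynomial (RatFunc K)) -
          (X : Polynomial (RatFunc K)) • (1 : Matrix (Fin n) (Fin n) (Polynomial (RatFunc K)))).det
      = C (RatFunc.X ^ 2) + h.map (RatFunc.C : K →+* RatFunc K) * C RatFunc.X +
          C (RatFunc.C (∏ i ∈ Finset.Icc 1 n, I i * V i)) := by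
  obtain ⟨m, rfl⟩ : ∃ m, n = m + 3 := ⟨n - 3, by omega⟩
  classical
  set dK : ℕ → K := fun i => I (i+1) + V (if i = 0 then m+3 else i) with hdK
  set cK : ℕ → K := fun j => I (j+1) * V (j+1) with hcK
  obtain ⟨hpdeg, hpc⟩ := triP_spec (m+3) dK cK
  obtain ⟨hp'deg, -⟩ := triP_spec (m+1) (fun i => dK (i+1)) (fun i => cK (i+1))
  refine ⟨(-1)^(m+2) * (triP K (m+3) dK cK
      - Polynomial.C (I (m+3) * V (m+3))
        * triP K (m+1) (fun i => dK (i+1)) (fun i => cK (i+1))), ?_, ?_⟩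
  · -- degree computation
    have hq : ((-1 : K[X])^(m+2)) = Polynomial.C ((-1 : K)^(m+2)) := by
      rw [map_pow, map_neg, map_one]
    have hco : ((-1 : K[X])^(m+2) * (triP K (m+3) dK cK
        - Polynomial.C (I (m+3) * V (m+3))
          * triP K (m+1) (fun i => dK (i+1)) (fun i => cK (i+1)))).coeff (m+3)
        = (-1 : K)^(m+2) * (-1)^(m+3) := by
      rw [hq, coeff_C_mul, coeff_sub, hpc, coeff_C_mul,
        coeff_eq_zero_of_natDegree_lt (lt_of_le_of_lt hp'deg (by omega)), mul_zero, sub_zero]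
    have hub : ((-1 : K[X])^(m+2) * (triP K (m+3) dK cK
        - Polynomial.C (I (m+3) * V (m+3))
          * triP K (m+1) (fun i => dK (i+1)) (fun i => cK (i+1)))).natDegree ≤ m+3 := by
      refine le_trans natDegree_mul_le ?_
      have h1 : ((-1 : K[X])^(m+2)).natDegree = 0 := by rw [hq, natDegree_C]
      have h2 : (triP K (m+3) dK cK
          - Polynomial.C (I (m+3) * V (m+3))
            * triP K (m+1) (fun i => dK (i+1)) (fun i => cK (i+1))).natDegree ≤ m+3 := by
        refine le_trans (natDegree_sub_le _ _) (max_le hpdeg ?_)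
        refine le_trans natDegree_mul_le ?_
        rw [natDegree_C]
        omega
      omega
    refine le_antisymm hub (le_natDegree_of_ne_zero ?_)
    rw [hco]
    exact mul_ne_zero (pow_ne_zero _ (neg_ne_zero.mpr one_ne_zero))
      (pow_ne_zero _ (neg_ne_zero.mpr one_ne_zero))
  · -- the determinant identity
    set dS : ℕ → Polynomial (RatFunc K) := fun i => C (RatFunc.C (dK i)) - X with hdS
    set cS : ℕ → Polynomial (RatFunc K) := fun j => C (RatFunc.C (cK j)) with hcS
    set a : Polynomial (RatFunc K) := C (RatFunc.C (I (m+3) * V (m+3)) / RatFunc.X) with ha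
    set zP : Polynomial (RatFunc K) := C (RatFunc.X) with hzP
    set e1 : Fin (m+3) → Polynomial (RatFunc K) := Pi.single (Fin.last (m+2)) 1 with he1
    set e0 : Fin (m+3) → Polynomial (RatFunc K) := Pi.single 0 1 with he0
    have hlast0 : (Fin.last (m+2) : Fin (m+3)) ≠ 0 := by
      intro hcon
      have := congrArg Fin.val hcon
      simp [Fin.val_last] at this
    have hmat : (pJac K (m+3) I V).map (C : RatFunc K →+* Polynomial (RatFunc K))
          - (X : Polynomial (RatFunc K)) • (1 : Matrix (Fin (m+3)) (Fin (m+3)) (Polynomial (RatFunc K)))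
        = ((triM (Polynomial (RatFunc K)) (m+3) dS cS).updateRow 0
            ((triM (Polynomial (RatFunc K)) (m+3) dS cS) 0
              + a • e1)).updateRow
            (Fin.last (m+2))
            ((triM (Polynomial (RatFunc K)) (m+3) dS cS) (Fin.last (m+2))
              + zP • e0) := by
      refine Matrix.ext fun i j => ?_
      rw [Matrix.updateRow_apply, Matrix.updateRow_apply]
      simp only [triM, hdS, hcS, hdK, hcK, ha, hzP, he1, he0, pJac, Matrix.sub_apply, Matrix.map_apply,
        Matrix.smul_apply, Matrix.one_apply, smul_eq_mul, Matrix.of_apply, Pi.add_apply,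
        Pi.smul_apply, Pi.single_apply, Fin.ext_iff, Fin.val_last, Fin.val_zero, map_one,
        map_zero]
      split_ifs <;>
        first
          | (exfalso; assumption)
          | (exfalso; omega)
          | ring1
          | (solve | simp)
          | ((try rw [show (i : ℕ) = 0 from by omega]);
             (try rw [show (i : ℕ) = m+2 from by omega]);
             (try rw [show (j : ℕ) = 0 from by omega]);
             (try rw [show (j : ℕ) = m+2 from by omega]);
             first | ring1 | (solve | simp) | norm_num)
    rw [hmat]
    set T := triM (Polynomial (RatFunc K)) (m+3) dS cS with hT
    have hrow1 : (T.updateRow 0 (T 0 + a • e1)) (Fin.last (m+2))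
        = T (Fin.last (m+2)) := Matrix.updateRow_ne hlast0
    have hd1 : ((T.updateRow 0 (T 0 + a • e1)).updateRow
          (Fin.last (m+2)) (T (Fin.last (m+2)) + zP • e0)).det
        = (T.updateRow 0 (T 0 + a • e1)).det
          + zP * ((T.updateRow 0 (T 0 + a • e1)).updateRow
              (Fin.last (m+2)) (e0)).det := by
      conv_lhs => rw [← hrow1]
      rw [Matrix.det_updateRow_add, Matrix.updateRow_eq_self, Matrix.det_updateRow_smul]
    have hd2 : (T.updateRow 0 (T 0 + a • e1)).det
        = T.det + a * (T.updateRow 0 (e1)).det := by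
      rw [Matrix.det_updateRow_add, Matrix.updateRow_eq_self, Matrix.det_updateRow_smul]
    have h00 : (T.updateRow (Fin.last (m+2)) (e0)) 0 = T 0 :=
      Matrix.updateRow_ne (Ne.symm hlast0)
    have hswap : (T.updateRow 0 (T 0 + a • e1)).updateRow
          (Fin.last (m+2)) (e0)
        = (T.updateRow (Fin.last (m+2)) (e0)).updateRow 0
            ((T.updateRow (Fin.last (m+2)) (e0)) 0
              + a • e1) := by
      rw [h00]
      refine Matrix.ext fun r s => ?_
      simp only [Matrix.updateRow_apply]
      by_cases hr1 : r = Fin.last (m+2)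
      · subst hr1
        rw [if_pos rfl, if_neg hlast0, if_pos rfl]
      · rw [if_neg hr1]
        by_cases hr0 : r = 0
        · subst hr0
          rw [if_pos rfl, if_pos rfl]
        · rw [if_neg hr0, if_neg hr0, if_neg hr1]
    have hd3 : ((T.updateRow (Fin.last (m+2)) (e0)).updateRow 0
          ((T.updateRow (Fin.last (m+2)) (e0)) 0
            + a • e1)).det
        = (T.updateRow (Fin.last (m+2)) (e0)).det
          + a * ((T.updateRow (Fin.last (m+2)) (e0)).updateRow 0
              (e1)).det := by
      rw [Matrix.det_updateRow_add, Matrix.updateRow_eq_self, Matrix.det_updateRow_smul]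
    rw [hd1, hd2, hswap, hd3, hT, he1, he0, cof1, cof2, cof3]
    -- identify determinants with polynomial images
    have hmapT : (triM (Polynomial (RatFunc K)) (m+3) dS cS).det
        = (triP K (m+3) dK cK).map RatFunc.C := by
      have : (triP K (m+3) dK cK).map RatFunc.C
          = (mapRingHom (RatFunc.C : K →+* RatFunc K)) (triP K (m+3) dK cK) := by
        rw [coe_mapRingHom]
      rw [this, triP, RingHom.map_det, RingHom.mapMatrix_apply, triM_map]
      have hd : ((⇑(mapRingHom (RatFunc.C : K →+* RatFunc K)))
          ∘ (fun i => C (dK i) - X)) = dS := by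
        funext i; simp [hdS, coe_mapRingHom]
      have hc : ((⇑(mapRingHom (RatFunc.C : K →+* RatFunc K)))
          ∘ (fun i => C (cK i))) = cS := by
        funext i; simp [hcS, coe_mapRingHom]
      rw [hd, hc]
    have hmapT' : (triM (Polynomial (RatFunc K)) (m+1) (fun i => dS (i+1))
          (fun i => cS (i+1))).det
        = (triP K (m+1) (fun i => dK (i+1)) (fun i => cK (i+1))).map RatFunc.C := by
      have : (triP K (m+1) (fun i => dK (i+1)) (fun i => cK (i+1))).map RatFunc.C
          = (mapRingHom (RatFunc.C : K →+* RatFunc K))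
              (triP K (m+1) (fun i => dK (i+1)) (fun i => cK (i+1))) := by
        rw [coe_mapRingHom]
      rw [this, triP, RingHom.map_det, RingHom.mapMatrix_apply, triM_map]
      have hd : ((⇑(mapRingHom (RatFunc.C : K →+* RatFunc K)))
          ∘ (fun i => C (dK (i+1)) - X)) = fun i => dS (i+1) := by
        funext i; simp [hdS, coe_mapRingHom]
      have hc : ((⇑(mapRingHom (RatFunc.C : K →+* RatFunc K)))
          ∘ (fun i => C (cK (i+1)))) = fun i => cS (i+1) := by
        funext i; simp [hcS, coe_mapRingHom]
      rw [hd, hc]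
    rw [hmapT, hmapT']
    -- scalar identities
    have hwa : zP * a = C (RatFunc.C (I (m+3) * V (m+3))) := by
      rw [hzP, ha, ← map_mul]
      congr 1
      rw [mul_comm, div_mul_cancel₀ _ RatFunc.X_ne_zero]
    have hprod : (∏ r : Fin (m+2), cS (r : ℕ))
        = C (RatFunc.C (∏ r ∈ Finset.range (m+2), cK r)) := by
      rw [Fin.prod_univ_eq_prod_range (fun r => cS r) (m+2), hcS]
      exact (map_prod ((Polynomial.C : RatFunc K →+* Polynomial (RatFunc K)).comp
        (RatFunc.C : K →+* RatFunc K)) cK (Finset.range (m+2))).symm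
    have hIcc : (∏ i ∈ Finset.Icc 1 (m+3), (I i * V i))
        = (∏ r ∈ Finset.range (m+2), cK r) * (I (m+3) * V (m+3)) := by
      have key : ∀ N : ℕ, (∏ i ∈ Finset.Icc 1 N, (I i * V i))
          = ∏ r ∈ Finset.range N, cK r := by
        intro N
        induction N with
        | zero => simp
        | succ N ih =>
          rw [Finset.prod_Icc_succ_top (by omega), ih, Finset.prod_range_succ]
      rw [key (m+3), Finset.prod_range_succ]
    have hX2 : C (RatFunc.X ^ 2) = zP ^ 2 := by rw [map_pow, hzP]
    have hmaph : ((-1 : K[X])^(m+2) * (triP K (m+3) dK cK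
          - Polynomial.C (I (m+3) * V (m+3))
            * triP K (m+1) (fun i => dK (i+1)) (fun i => cK (i+1)))).map RatFunc.C
        = (-1 : Polynomial (RatFunc K))^(m+2) * ((triP K (m+3) dK cK).map RatFunc.C
            - C (RatFunc.C (I (m+3) * V (m+3)))
              * (triP K (m+1) (fun i => dK (i+1)) (fun i => cK (i+1))).map RatFunc.C) := by
      rw [Polynomial.map_mul, Polynomial.map_pow, Polynomial.map_neg, Polynomial.map_one,
        Polynomial.map_sub, Polynomial.map_mul, Polynomial.map_C]
    have hCC : C (RatFunc.C ((∏ r ∈ Finset.range (m+2), cK r) * (I (m+3) * V (m+3))))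
        = C (RatFunc.C (∏ r ∈ Finset.range (m+2), cK r))
          * C (RatFunc.C (I (m+3) * V (m+3))) := by
      rw [map_mul, map_mul]
    rw [show m + 3 - 1 = m + 2 by omega, hmaph, hX2, hIcc, hCC, hprod]
    have hs : ((-1 : Polynomial (RatFunc K))^(m+2)) * ((-1 : Polynomial (RatFunc K))^(m+2))
        = 1 := by
      rw [← pow_add, show (m+2)+(m+2) = 2*(m+2) by ring, pow_mul]
      norm_num
    rw [← hwa]
    linear_combination (zP * a * C (RatFunc.C (∏ r ∈ Finset.range (m+2), cK r)) + zP * zP) * hs
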